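/- Let a < b be real numbers. The convex hull of the set {(x, x²) : x ∈ [a, b]} ⊆ ℝ² equals the set {(x, v) ∈ ℝ² : a ≤ x ≤ b, x² ≤ v ≤ (a+b)·x - a·b}. -/

import Mathlib

/-- The convex hull of the graph of the square function over [a,b] is the region
between the parabola and the secant line through the endpoints. -/
theorem convexHull_sq_graph (a b : ℝ) (hab : a < b) :
    convexHull ℝ {p : ℝ × ℝ | ∃ x ∈ Set.Icc a b, p = (x, x ^ 2)} =
      {p : ℝ × ℝ | a ≤ p.1 ∧ p.1 ≤ b ∧ p.1 ^ 2 ≤ p.2 ∧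
        p.2 ≤ (a + b) * p.1 - a * b} := by
  have hba : (0:ℝ) < b - a := by linarith
  apply le_antisymm
  · apply convexHull_min
    · rintro p ⟨x, ⟨hax, hxb⟩, rfl⟩
      refine ⟨hax, hxb, le_refl _, ?_⟩
      simp only [Set.mem_setOf_eq]
      nlinarith [mul_nonneg (sub_nonneg.2 hax) (sub_nonneg.2 hxb)]
    · rintro p ⟨hp1, hp2, hp3, hp4⟩ q ⟨hq1, hq2, hq3, hq4⟩ u v hu hv huv
      simp only [Set.mem_setOf_eq, Prod.fst_add, Prod.snd_add, Prod.smul_fst,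
        Prod.smul_snd, smul_eq_mul]
      have e1 : u * a + v * a = a := by rw [← add_mul, huv, one_mul]
      have e2 : u * b + v * b = b := by rw [← add_mul, huv, one_mul]
      have e3 : u * (a * b) + v * (a * b) = a * b := by rw [← add_mul, huv, one_mul]
      refine ⟨?_, ?_, ?_, ?_⟩
      · nlinarith [mul_le_mul_of_nonneg_left hp1 hu, mul_le_mul_of_nonneg_left hq1 hv, e1]
      · nlinarith [mul_le_mul_of_nonneg_left hp2 hu, mul_le_mul_of_nonneg_left hq2 hv, e2]
      · nlinarith [sq_nonneg (p.1 - q.1), mul_nonneg hu hv,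
          mul_le_mul_of_nonneg_left hp3 hu, mul_le_mul_of_nonneg_left hq3 hv]
      · nlinarith [mul_le_mul_of_nonneg_left hp4 hu, mul_le_mul_of_nonneg_left hq4 hv, e3]
  · rintro ⟨x, w⟩ ⟨hax, hxb, hlow, hhigh⟩
    simp only [Set.mem_setOf_eq] at hlow hhigh ⊢
    have hsub : {p : ℝ × ℝ | ∃ x ∈ Set.Icc a b, p = (x, x ^ 2)} ⊆
        convexHull ℝ {p : ℝ × ℝ | ∃ x ∈ Set.Icc a b, p = (x, x ^ 2)} :=
      subset_convexHull ℝ _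
    have hA : ((a, a ^ 2) : ℝ × ℝ) ∈ convexHull ℝ _ :=
      hsub ⟨a, ⟨le_refl a, le_of_lt hab⟩, rfl⟩
    have hB : ((b, b ^ 2) : ℝ × ℝ) ∈ convexHull ℝ _ :=
      hsub ⟨b, ⟨le_of_lt hab, le_refl b⟩, rfl⟩
    have hP : ((x, x ^ 2) : ℝ × ℝ) ∈ convexHull ℝ _ :=
      hsub ⟨x, ⟨hax, hxb⟩, rfl⟩
    have hconv := convex_convexHull ℝ {p : ℝ × ℝ | ∃ x ∈ Set.Icc a b, p = (x, x ^ 2)}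
    set s : ℝ := (a + b) * x - a * b with hs
    -- secant point
    set t : ℝ := (b - x) / (b - a) with ht
    have ht0 : 0 ≤ t := div_nonneg (by linarith) (by linarith)
    have ht1 : 0 ≤ 1 - t := by
      rw [ht]
      rw [sub_nonneg, div_le_one hba]
      linarith
    have hQ : t • ((a, a ^ 2) : ℝ × ℝ) + (1 - t) • ((b, b ^ 2) : ℝ × ℝ) ∈
        convexHull ℝ {p : ℝ × ℝ | ∃ x ∈ Set.Icc a b, p = (x, x ^ 2)} :=
      hconv hA hB ht0 ht1 (by ring)
    have hQeq : t • ((a, a ^ 2) : ℝ × ℝ) + (1 - t) • ((b, b ^ 2) : ℝ × ℝ) = (x, s) := by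
      have hne : b - a ≠ 0 := ne_of_gt hba
      rw [Prod.ext_iff]
      constructor <;> simp only [Prod.fst_add, Prod.snd_add, Prod.smul_fst,
        Prod.smul_snd, smul_eq_mul] <;> simp only [ht, hs] <;> field_simp <;> ring
    rw [hQeq] at hQ
    have hxs : x ^ 2 ≤ s := le_trans hlow hhigh
    rcases eq_or_lt_of_le hxs with heq | hlt
    · have : w = x ^ 2 := le_antisymm (heq ▸ hhigh) hlow
      rw [this]
      exact hP
    · set θ : ℝ := (s - w) / (s - x ^ 2) with hθ
      have hd : (0:ℝ) < s - x ^ 2 := by linarith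
      have hθ0 : 0 ≤ θ := div_nonneg (by linarith) (le_of_lt hd)
      have hθ1 : 0 ≤ 1 - θ := by
        rw [hθ, sub_nonneg, div_le_one hd]
        linarith
      have hmem := hconv hP hQ hθ0 hθ1 (by ring)
      have : θ • ((x, x ^ 2) : ℝ × ℝ) + (1 - θ) • ((x, s) : ℝ × ℝ) = (x, w) := by
        rw [Prod.ext_iff]
        constructor <;> simp only [Prod.fst_add, Prod.snd_add, Prod.smul_fst,
          Prod.smul_snd, smul_eq_mul]
        · ring
        · rw [hθ]
          field_simp
          ring
      rwa [this] at hmem
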